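/- Let m_L, m_R be charge-1 ADHM data as above with a_{1L} ≠ a_{1R}, and form m = m_L ⊞_0 m_R. Then m is degenerate (i.e. admits a nonzero c-special subspace or a proper b-special subspace) if and only if at least one of the four vectors b_L, b_R, c_L, c_R ∈ ℂ^r is zero. -/
import Mathlib


open Matrix

/-- `W' ⊆ ℂ²` is b-special for charge-2 ADHM data `(a1, a2, b, c)`:
invariant under `a1, a2` and containing `Im b`. -/
def IsBSpecial {r : ℕ} (a1 a2 : Matrix (Fin 2) (Fin 2) ℂ)
    (b : Matrix (Fin 2) (Fin r) ℂ) (W' : Submodule ℂ (Fin 2 → ℂ)) : Prop :=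
  W'.map a1.mulVecLin ≤ W' ∧ W'.map a2.mulVecLin ≤ W' ∧
    LinearMap.range b.mulVecLin ≤ W'

/-- `W' ⊆ ℂ²` is c-special for charge-2 ADHM data `(a1, a2, b, c)`:
invariant under `a1, a2` and contained in `Ker c`. -/
def IsCSpecial {r : ℕ} (a1 a2 : Matrix (Fin 2) (Fin 2) ℂ)
    (c : Matrix (Fin r) (Fin 2) ℂ) (W' : Submodule ℂ (Fin 2 → ℂ)) : Prop :=
  W'.map a1.mulVecLin ≤ W' ∧ W'.map a2.mulVecLin ≤ W' ∧
    W' ≤ LinearMap.ker c.mulVecLin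

/-- Charge-2 ADHM data is degenerate iff it admits a proper b-special subspace or a
nonzero c-special subspace. -/
def IsDegenerate {r : ℕ} (a1 a2 : Matrix (Fin 2) (Fin 2) ℂ)
    (b : Matrix (Fin 2) (Fin r) ℂ) (c : Matrix (Fin r) (Fin 2) ℂ) : Prop :=
  (∃ W', IsBSpecial a1 a2 b W' ∧ W' ≠ ⊤) ∨ (∃ W', IsCSpecial a1 a2 c W' ∧ W' ≠ ⊥)

namespace Stmt17Aux

noncomputable def e0 : Fin 2 → ℂ := ![1, 0]
noncomputable def e1 : Fin 2 → ℂ := ![0, 1]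

lemma vec_eq (w : Fin 2 → ℂ) : w = w 0 • e0 + w 1 • e1 := by
  funext i; fin_cases i <;> simp [e0, e1]

lemma mulVec2 (p q s t : ℂ) (w : Fin 2 → ℂ) :
    (!![p, q; s, t]).mulVec w = ![p * w 0 + q * w 1, s * w 0 + t * w 1] := by
  funext i; fin_cases i <;>
    simp [Matrix.mulVec, dotProduct, Fin.sum_univ_two]

lemma bMulVec {r : ℕ} (bL bR : Fin r → ℂ) (x : Fin r → ℂ) :
    (Matrix.of ![bL, bR]).mulVec x = ![bL ⬝ᵥ x, bR ⬝ᵥ x] := by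
  funext i; fin_cases i <;> simp [Matrix.mulVec]

lemma cMulVec {r : ℕ} (cL cR : Fin r → ℂ) (w : Fin 2 → ℂ) :
    ((Matrix.of ![cL, cR])ᵀ).mulVec w = w 0 • cL + w 1 • cR := by
  funext i
  simp [Matrix.mulVec, dotProduct, Fin.sum_univ_two, mul_comm]

lemma mem_span_e0 (v : Fin 2 → ℂ) : v ∈ Submodule.span ℂ {e0} ↔ v 1 = 0 := by
  rw [Submodule.mem_span_singleton]
  constructor
  · rintro ⟨t, rfl⟩; simp [e0]
  · intro h
    refine ⟨v 0, ?_⟩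
    funext i; fin_cases i
    · simp [e0]
    · simpa [e0] using h.symm

lemma mem_span_e1 (v : Fin 2 → ℂ) : v ∈ Submodule.span ℂ {e1} ↔ v 0 = 0 := by
  rw [Submodule.mem_span_singleton]
  constructor
  · rintro ⟨t, rfl⟩; simp [e1]
  · intro h
    refine ⟨v 1, ?_⟩
    funext i; fin_cases i
    · simpa [e1] using h.symm
    · simp [e1]

lemma span_e0_ne_top : Submodule.span ℂ {e0} ≠ ⊤ := by
  intro h
  have : e1 ∈ Submodule.span ℂ {e0} := h ▸ Submodule.mem_top
  rw [mem_span_e0] at this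
  simp [e1] at this

lemma span_e1_ne_top : Submodule.span ℂ {e1} ≠ ⊤ := by
  intro h
  have : e0 ∈ Submodule.span ℂ {e1} := h ▸ Submodule.mem_top
  rw [mem_span_e1] at this
  simp [e0] at this

lemma span_e0_ne_bot : Submodule.span ℂ {e0} ≠ ⊥ := by
  intro h
  have : e0 ∈ Submodule.span ℂ {e0} := Submodule.mem_span_singleton_self _
  rw [h, Submodule.mem_bot] at this
  have := congrFun this 0
  simp [e0] at this

lemma span_e1_ne_bot : Submodule.span ℂ {e1} ≠ ⊥ := by
  intro h
  have : e1 ∈ Submodule.span ℂ {e1} := Submodule.mem_span_singleton_self _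
  rw [h, Submodule.mem_bot] at this
  have := congrFun this 1
  simp [e1] at this

lemma span_e0_stable (M : Matrix (Fin 2) (Fin 2) ℂ)
    (h : M.mulVec e0 ∈ Submodule.span ℂ {e0}) :
    (Submodule.span ℂ {e0}).map M.mulVecLin ≤ Submodule.span ℂ {e0} := by
  rintro x ⟨w, hw, rfl⟩
  rcases Submodule.mem_span_singleton.mp hw with ⟨t, rfl⟩
  rw [_root_.map_smul]
  exact Submodule.smul_mem _ t (by simpa using h)

lemma span_e1_stable (M : Matrix (Fin 2) (Fin 2) ℂ)
    (h : M.mulVec e1 ∈ Submodule.span ℂ {e1}) :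
    (Submodule.span ℂ {e1}).map M.mulVecLin ≤ Submodule.span ℂ {e1} := by
  rintro x ⟨w, hw, rfl⟩
  rcases Submodule.mem_span_singleton.mp hw with ⟨t, rfl⟩
  rw [_root_.map_smul]
  exact Submodule.smul_mem _ t (by simpa using h)

lemma classify (l m : ℂ) (h : l ≠ m) (W' : Submodule ℂ (Fin 2 → ℂ))
    (hW : W'.map (!![l, 0; 0, m]).mulVecLin ≤ W') :
    W' = ⊥ ∨ W' = Submodule.span ℂ {e0} ∨ W' = Submodule.span ℂ {e1} ∨ W' = ⊤ := by
  have key0 : ∀ w ∈ W', (w 0) • e0 ∈ W' := by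
    intro w hw
    have h1 : (!![l, 0; 0, m]).mulVec w ∈ W' := hW ⟨w, hw, rfl⟩
    have h2 : (!![l, 0; 0, m]).mulVec w - m • w ∈ W' :=
      W'.sub_mem h1 (W'.smul_mem m hw)
    have h3 : (!![l, 0; 0, m]).mulVec w - m • w = ((l - m) * w 0) • e0 := by
      rw [mulVec2]; funext i; fin_cases i <;> simp [e0] <;> ring
    rw [h3] at h2
    have h4 := W'.smul_mem (l - m)⁻¹ h2
    rwa [smul_smul, inv_mul_cancel_left₀ (sub_ne_zero.mpr h)] at h4
  have key1 : ∀ w ∈ W', (w 1) • e1 ∈ W' := by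
    intro w hw
    have h1 : (!![l, 0; 0, m]).mulVec w ∈ W' := hW ⟨w, hw, rfl⟩
    have h2 : (!![l, 0; 0, m]).mulVec w - l • w ∈ W' :=
      W'.sub_mem h1 (W'.smul_mem l hw)
    have h3 : (!![l, 0; 0, m]).mulVec w - l • w = ((m - l) * w 1) • e1 := by
      rw [mulVec2]; funext i; fin_cases i <;> simp [e1] <;> ring
    rw [h3] at h2
    have h4 := W'.smul_mem (m - l)⁻¹ h2
    rwa [smul_smul, inv_mul_cancel_left₀ (sub_ne_zero.mpr h.symm)] at h4
  by_cases h0 : e0 ∈ W' <;> by_cases h1 : e1 ∈ W'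
  · right; right; right
    rw [Submodule.eq_top_iff']
    intro w
    rw [vec_eq w]
    exact W'.add_mem (W'.smul_mem _ h0) (W'.smul_mem _ h1)
  · right; left
    apply le_antisymm
    · intro w hw
      have hw1 : w 1 = 0 := by
        by_contra hne
        have := W'.smul_mem (w 1)⁻¹ (key1 w hw)
        rw [smul_smul, inv_mul_cancel₀ hne, one_smul] at this
        exact h1 this
      rw [mem_span_e0]; exact hw1
    · exact Submodule.span_le.mpr (Set.singleton_subset_iff.mpr h0)
  · right; right; left
    apply le_antisymm
    · intro w hw
      have hw0 : w 0 = 0 := by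
        by_contra hne
        have := W'.smul_mem (w 0)⁻¹ (key0 w hw)
        rw [smul_smul, inv_mul_cancel₀ hne, one_smul] at this
        exact h0 this
      rw [mem_span_e1]; exact hw0
    · exact Submodule.span_le.mpr (Set.singleton_subset_iff.mpr h1)
  · left
    rw [Submodule.eq_bot_iff]
    intro w hw
    have hw0 : w 0 = 0 := by
      by_contra hne
      have := W'.smul_mem (w 0)⁻¹ (key0 w hw)
      rw [smul_smul, inv_mul_cancel₀ hne, one_smul] at this
      exact h0 this
    have hw1 : w 1 = 0 := by
      by_contra hne
      have := W'.smul_mem (w 1)⁻¹ (key1 w hw)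
      rw [smul_smul, inv_mul_cancel₀ hne, one_smul] at this
      exact h1 this
    funext i; fin_cases i <;> simp [hw0, hw1]

end Stmt17Aux

open Stmt17Aux

lemma dot_single' {r : ℕ} (v : Fin r → ℂ) (i : Fin r) : v ⬝ᵥ Pi.single i 1 = v i := by
  simp [dotProduct, Pi.single_apply]

/-- The glued charge-2 data `m_L ⊞_0 m_R` (with `a_{1L} ≠ a_{1R}`) is degenerate if and
only if at least one of the four vectors `b_L, b_R, c_L, c_R` is zero. -/
theorem stmt17 {r : ℕ} (a1L a2L a1R a2R : ℂ) (hne : a1L ≠ a1R)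
    (bL cL bR cR : Fin r → ℂ) (hL : bL ⬝ᵥ cL = 0) (hR : bR ⬝ᵥ cR = 0) :
    let a1 : Matrix (Fin 2) (Fin 2) ℂ := !![a1L, 0; 0, a1R]
    let a2 : Matrix (Fin 2) (Fin 2) ℂ :=
      !![a2L, (bL ⬝ᵥ cR) / (a1R - a1L);
         (bR ⬝ᵥ cL) / (a1L - a1R), a2R]
    let b : Matrix (Fin 2) (Fin r) ℂ := Matrix.of ![bL, bR]
    let c : Matrix (Fin r) (Fin 2) ℂ := (Matrix.of ![cL, cR])ᵀ
    (IsDegenerate a1 a2 b c ↔ bL = 0 ∨ bR = 0 ∨ cL = 0 ∨ cR = 0) := by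
  intro a1 a2 b c
  have ha1 : a1 = !![a1L, 0; 0, a1R] := rfl
  have ha2 : a2 = !![a2L, (bL ⬝ᵥ cR) / (a1R - a1L);
         (bR ⬝ᵥ cL) / (a1L - a1R), a2R] := rfl
  have hb : b = Matrix.of ![bL, bR] := rfl
  have hc : c = (Matrix.of ![cL, cR])ᵀ := rfl
  constructor
  · rintro (⟨W', ⟨hA1, _hA2, hbr⟩, hnt⟩ | ⟨W', ⟨hA1, _hA2, hkr⟩, hnb⟩)
    · rw [ha1] at hA1
      rcases classify a1L a1R hne W' hA1 with h | h | h | h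
      · subst h
        left; funext i
        have hm := hbr (LinearMap.mem_range_self b.mulVecLin (Pi.single i 1))
        rw [Submodule.mem_bot] at hm
        have h2 := congrFun hm 0
        simpa [hb, Matrix.mulVecLin_apply, bMulVec, dot_single'] using h2
      · subst h
        right; left; funext i
        have hm := hbr (LinearMap.mem_range_self b.mulVecLin (Pi.single i 1))
        rw [mem_span_e0] at hm
        simpa [hb, Matrix.mulVecLin_apply, bMulVec, dot_single'] using hm
      · subst h
        left; funext i
        have hm := hbr (LinearMap.mem_range_self b.mulVecLin (Pi.single i 1))
        rw [mem_span_e1] at hm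
        simpa [hb, Matrix.mulVecLin_apply, bMulVec, dot_single'] using hm
      · exact absurd h hnt
    · rw [ha1] at hA1
      rcases classify a1L a1R hne W' hA1 with h | h | h | h
      · exact absurd h hnb
      · subst h
        right; right; left
        have hm := hkr (Submodule.mem_span_singleton_self e0)
        rw [LinearMap.mem_ker] at hm
        have := congrFun hm
        simpa [hc, Matrix.mulVecLin_apply, cMulVec, e0] using hm
      · subst h
        right; right; right
        have hm := hkr (Submodule.mem_span_singleton_self e1)
        rw [LinearMap.mem_ker] at hm
        simpa [hc, Matrix.mulVecLin_apply, cMulVec, e1] using hm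
      · subst h
        right; right; left
        have hm := hkr (Submodule.mem_top (x := e0))
        rw [LinearMap.mem_ker] at hm
        simpa [hc, Matrix.mulVecLin_apply, cMulVec, e0] using hm
  · rintro (h | h | h | h)
    · -- bL = 0 : span e1 is b-special and proper
      refine Or.inl ⟨Submodule.span ℂ {e1}, ⟨?_, ?_, ?_⟩, span_e1_ne_top⟩
      · apply span_e1_stable
        rw [ha1, mulVec2, mem_span_e1]; simp [e1]
      · apply span_e1_stable
        rw [ha2, mulVec2, mem_span_e1]; simp [e1, h]
      · rintro x ⟨y, rfl⟩
        rw [mem_span_e1]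
        simp [hb, Matrix.mulVecLin_apply, bMulVec, h]
    · -- bR = 0 : span e0 is b-special and proper
      refine Or.inl ⟨Submodule.span ℂ {e0}, ⟨?_, ?_, ?_⟩, span_e0_ne_top⟩
      · apply span_e0_stable
        rw [ha1, mulVec2, mem_span_e0]; simp [e0]
      · apply span_e0_stable
        rw [ha2, mulVec2, mem_span_e0]; simp [e0, h]
      · rintro x ⟨y, rfl⟩
        rw [mem_span_e0]
        simp [hb, Matrix.mulVecLin_apply, bMulVec, h]
    · -- cL = 0 : span e0 is c-special and nonzero
      refine Or.inr ⟨Submodule.span ℂ {e0}, ⟨?_, ?_, ?_⟩, span_e0_ne_bot⟩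
      · apply span_e0_stable
        rw [ha1, mulVec2, mem_span_e0]; simp [e0]
      · apply span_e0_stable
        rw [ha2, mulVec2, mem_span_e0]; simp [e0, h]
      · intro w hw
        rw [mem_span_e0] at hw
        rw [LinearMap.mem_ker, hc, Matrix.mulVecLin_apply, cMulVec, hw, h]
        simp
    · -- cR = 0 : span e1 is c-special and nonzero
      refine Or.inr ⟨Submodule.span ℂ {e1}, ⟨?_, ?_, ?_⟩, span_e1_ne_bot⟩
      · apply span_e1_stable
        rw [ha1, mulVec2, mem_span_e1]; simp [e1]
      · apply span_e1_stable
        rw [ha2, mulVec2, mem_span_e1]; simp [e1, h]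
      · intro w hw
        rw [mem_span_e1] at hw
        rw [LinearMap.mem_ker, hc, Matrix.mulVecLin_apply, cMulVec, hw, h]
        simp
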